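/- Let F be an algebraically closed field of characteristic p > 2, let M be a function field over F, and let t ∈ M be transcendental over F, not a p-th power in M (so M/F(t) is separable), and such that all zeros and poles of t are simple. Then for all x, y ∈ M the following are equivalent. (a) There exist natural numbers s, i, j, i₁, j₁ and elements u, ũ, v, ṽ, u₁, ũ₁, v₁, ṽ₁ ∈ M such that the elements x^p − t, x^p − t^{−1}, y^p − t^{p^s}, y^p − t^{−p^s}, (x+1)^p − t, (x+1)^p − t^{−1}, (y+1)^p − t^{p^s}, (y+1)^p − t^{−p^s} are all nonzero and u = (x^p + t)/(x^p − t), ũ = (x^p + t^{−1})/(x^p − t^{−1}), v = (y^p + t^{p^s})/(y^p − t^{p^s}), ṽ = (y^p + t^{−p^s})/(y^p − t^{−p^s}), v = u^{p^i}, ṽ = ũ^{p^j}, and likewise u₁ = ((x+1)^p + t)/((x+1)^p − t), ũ₁ = ((x+1)^p + t^{−1})/((x+1)^p − t^{−1}), v₁ = ((y+1)^p + t^{p^s})/((y+1)^p − t^{p^s}), ṽ₁ = ((y+1)^p + t^{−p^s})/((y+1)^p − t^{−p^s}), v₁ = u₁^{p^{i₁}}, ṽ₁ = ũ₁^{p^{j₁}}.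 (b) There exists a natural number s with y = x^{p^s}. -/

import Mathlib

open Polynomial in
lemma aux_poly {F M : Type*} [Field F] [Field M] [Algebra F M] {x : M}
    (hx : Transcendental F x) {a b : ℕ} (ha : 0 < a)
    (h : x ^ a = (x + 1) ^ b ∨ x ^ a * (x + 1) ^ b = 1) : False := by
  apply hx
  rcases h with h | h
  · refine ⟨X ^ a - (X + 1) ^ b, ?_, ?_⟩
    · intro h0
      have := congrArg (Polynomial.eval 0) h0
      simp [zero_pow ha.ne'] at this
    · simp only [map_sub, map_pow, map_add, Polynomial.aeval_X, map_one]
      rw [h]; ring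
  · refine ⟨X ^ a * (X + 1) ^ b - 1, ?_, ?_⟩
    · intro h0
      have := congrArg (Polynomial.eval 0) h0
      simp [zero_pow ha.ne'] at this
    · simp only [map_sub, map_mul, map_pow, map_add, Polynomial.aeval_X, map_one]
      rw [h]; ring

lemma aux_root {M : Type*} [Field M] {p : ℕ} {t w z : M} (hw : w ≠ 0)
    (h : t * w ^ p = z ^ p) : ∃ c : M, c ^ p = t :=
  ⟨z * w⁻¹, by rw [mul_pow, ← h, inv_pow, mul_assoc, mul_inv_cancel₀ (pow_ne_zero _ hw), mul_one]⟩

lemma aux_cross {M : Type*} [Field M] (h2 : (2 : M) ≠ 0) {A B C D : M}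
    (hAB : A - B ≠ 0) (hCD : C - D ≠ 0)
    (h : (A + B) / (A - B) = (C + D) / (C - D)) : B * C = A * D := by
  rw [div_eq_div_iff hAB hCD] at h
  have h' : 2 * (B * C) = 2 * (A * D) := by linear_combination h
  exact mul_left_cancel₀ h2 h'

lemma aux_frob {M : Type*} [Field M] {p : ℕ} [Fact p.Prime] [CharP M p] {a b : M}
    (h : a ^ p = b ^ p) : a = b := by
  have h0 : (a - b) ^ p = 0 := by rw [sub_pow_char, h, sub_self]
  exact sub_eq_zero.mp ((pow_eq_zero_iff (Fact.out (p := p.Prime)).ne_zero).mp h0)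

lemma aux_key' {p : ℕ} (hp : p.Prime) (hp2 : 2 < p) {a b c : ℕ} (hab : a < b)
    (h : p ^ a + p ^ b = 2 * p ^ c) : False := by
  rcases lt_trichotomy a c with hac | hac | hac
  · have h1 : p ^ (a + 1) ∣ 2 * p ^ c := Dvd.dvd.mul_left (pow_dvd_pow p (by omega)) 2
    have h2 : p ^ (a + 1) ∣ p ^ b := pow_dvd_pow p (by omega)
    have h3 : p ^ (a + 1) ∣ p ^ a := by
      have : p ^ a = 2 * p ^ c - p ^ b := by omega
      rw [this]; exact Nat.dvd_sub h1 h2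
    have := Nat.le_of_dvd (pow_pos hp.pos a) h3
    have := Nat.pow_lt_pow_right hp.one_lt (show a < a + 1 by omega)
    omega
  · subst hac
    have : p ^ b = p ^ a := by omega
    have := Nat.pow_right_injective hp.two_le this
    omega
  · have h1 : p ^ (c + 1) ∣ p ^ a := pow_dvd_pow p (by omega)
    have h2 : p ^ (c + 1) ∣ p ^ b := pow_dvd_pow p (by omega)
    have h3 : p ^ (c + 1) ≤ 2 * p ^ c :=
      Nat.le_of_dvd (by positivity) (h ▸ Nat.dvd_add h1 h2)
    have h4 : p ^ c * 3 ≤ p ^ c * p := Nat.mul_le_mul_left _ (by omega)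
    have h5 : 0 < p ^ c := pow_pos hp.pos c
    rw [pow_succ] at h3
    omega

lemma aux_key {p : ℕ} (hp : p.Prime) (hp2 : 2 < p) {a b c : ℕ}
    (h : p ^ a + p ^ b = 2 * p ^ c) : a = b := by
  rcases lt_trichotomy a b with h' | h' | h'
  · exact absurd (aux_key' hp hp2 h' h) not_false
  · exact h'
  · exact absurd (aux_key' hp hp2 (a := b) (b := a) (c := c) h' (by omega)) not_false

lemma aux_tpow {F M : Type*} [Field F] [Field M] [Algebra F M] {t : M}
    (ht : Transcendental F t) {m n : ℕ} (h : t ^ m = t ^ n) : m = n := by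
  have ht0 : t ≠ 0 := fun h0 => ht (h0 ▸ isAlgebraic_zero)
  by_contra hne
  have key : ∀ m n : ℕ, n < m → t ^ m = t ^ n → False := by
    intro m n hlt h
    have h1 : t ^ (m - n) * t ^ n = 1 * t ^ n := by
      rw [one_mul, ← pow_add, Nat.sub_add_cancel hlt.le]; exact h
    have h2 : t ^ (m - n) = 1 := mul_right_cancel₀ (pow_ne_zero n ht0) h1
    exact (ht.pow (show 0 < m - n by omega)) (h2 ▸ isAlgebraic_one)
  rcases lt_or_gt_of_ne hne with h' | h'
  · exact key n m h' h.symm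
  · exact key m n h' h

lemma aux_shape {M : Type*} [Field M] {t x : M} (ht : t ≠ 0) {m n k : ℕ}
    (hmn : m ≠ n) (h : t ^ m = x ^ k * t ^ n) :
    ∃ L, 0 < L ∧ (t ^ L = x ^ k ∨ x ^ k * t ^ L = 1) := by
  rcases lt_or_gt_of_ne hmn with hlt | hlt
  · refine ⟨n - m, by omega, Or.inr ?_⟩
    have h1 : (x ^ k * t ^ (n - m)) * t ^ m = 1 * t ^ m := by
      rw [one_mul, mul_assoc, ← pow_add, Nat.sub_add_cancel hlt.le]; exact h.symm
    exact mul_right_cancel₀ (pow_ne_zero m ht) h1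
  · refine ⟨m - n, by omega, Or.inl ?_⟩
    have h1 : t ^ (m - n) * t ^ n = x ^ k * t ^ n := by
      rw [← pow_add, Nat.sub_add_cancel hlt.le]; exact h
    exact mul_right_cancel₀ (pow_ne_zero n ht) h1

lemma aux_sys {F M : Type*} [Field F] [Field M] [Algebra F M] {p : ℕ}
    (hp : p.Prime) (hp2 : 2 < p) [Fact p.Prime] [CharP M p]
    {t x y : M} (htrans : Transcendental F t) (hnp : ¬∃ c : M, c ^ p = t)
    (hx : x ≠ 0) {s i j : ℕ} (hs : 0 < s)
    (E1 : t ^ p ^ s * (x ^ p) ^ p ^ i = y ^ p * t ^ p ^ i)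
    (E2 : (x ^ p) ^ p ^ j * t ^ p ^ j = y ^ p * t ^ p ^ s) :
    y = x ^ p ^ s ∨ ∃ K L, 0 < K ∧ 0 < L ∧ (t ^ L = x ^ K ∨ x ^ K * t ^ L = 1) := by
  have ht0 : t ≠ 0 := fun h0 => htrans (h0 ▸ isAlgebraic_zero)
  have hps : p ^ (s - 1) * p = p ^ s := by rw [← pow_succ]; congr 1; omega
  have hy : y ≠ 0 := by
    intro h0
    rw [h0] at E1
    simp only [zero_pow hp.ne_zero, zero_mul] at E1
    exact (mul_ne_zero (pow_ne_zero _ ht0)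
      (pow_ne_zero _ (pow_ne_zero _ hx))) E1
  have hi : i ≠ 0 := by
    rintro rfl
    simp only [pow_zero, pow_one] at E1
    refine hnp (aux_root (z := t ^ p ^ (s - 1) * x) hy ?_)
    rw [mul_pow, ← pow_mul, hps]
    linear_combination -E1
  have hj : j ≠ 0 := by
    rintro rfl
    simp only [pow_zero, pow_one] at E2
    refine hnp (aux_root (z := y * t ^ p ^ (s - 1)) hx ?_)
    rw [mul_pow, ← pow_mul, hps]
    linear_combination E2
  have hpi : p ^ (i - 1) * p = p ^ i := by rw [← pow_succ]; congr 1; omega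
  have hpj : p ^ (j - 1) * p = p ^ j := by rw [← pow_succ]; congr 1; omega
  have G1 : t ^ p ^ (s - 1) * x ^ p ^ i = y * t ^ p ^ (i - 1) := by
    apply aux_frob (p := p)
    rw [mul_pow, mul_pow, ← pow_mul, ← pow_mul, ← pow_mul, hps, hpi]
    linear_combination E1
  have G2 : x ^ p ^ j * t ^ p ^ (j - 1) = y * t ^ p ^ (s - 1) := by
    apply aux_frob (p := p)
    rw [mul_pow, mul_pow, ← pow_mul, ← pow_mul, ← pow_mul, hps, hpj]
    linear_combination E2
  have H : t ^ (2 * p ^ (s - 1)) * x ^ p ^ i = x ^ p ^ j * t ^ (p ^ (i - 1) + p ^ (j - 1)) := by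
    linear_combination (t ^ p ^ (s - 1)) * G1 - (t ^ p ^ (i - 1)) * G2
  by_cases hij : i = j
  · subst hij
    left
    have hAB : t ^ (2 * p ^ (s - 1)) * x ^ p ^ i = t ^ (p ^ (i - 1) + p ^ (i - 1)) * x ^ p ^ i := by
      linear_combination H
    have hexp : 2 * p ^ (s - 1) = p ^ (i - 1) + p ^ (i - 1) :=
      aux_tpow htrans (mul_right_cancel₀ (pow_ne_zero _ hx) hAB)
    have hsi : s = i := by
      have h1 : p ^ (s - 1) = p ^ (i - 1) := by omega
      have := Nat.pow_right_injective hp.two_le h1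
      omega
    subst hsi
    have G1' : x ^ p ^ s * t ^ p ^ (s - 1) = y * t ^ p ^ (s - 1) := by
      linear_combination G1
    exact (mul_right_cancel₀ (pow_ne_zero _ ht0) G1').symm
  · right
    have hne2 : 2 * p ^ (s - 1) ≠ p ^ (i - 1) + p ^ (j - 1) := by
      intro hEq
      have := aux_key hp hp2 (a := i - 1) (b := j - 1) (c := s - 1) (by omega)
      omega
    rcases lt_or_gt_of_ne hij with hlt | hlt
    · have hple : p ^ i ≤ p ^ j := Nat.pow_le_pow_right hp.pos hlt.le
      have hplt : p ^ i < p ^ j := Nat.pow_lt_pow_right hp.one_lt hlt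
      have hsplit : (x : M) ^ p ^ j = x ^ (p ^ j - p ^ i) * x ^ p ^ i := by
        rw [← pow_add]; congr 1; omega
      have hsh : t ^ (2 * p ^ (s - 1)) = x ^ (p ^ j - p ^ i) * t ^ (p ^ (i - 1) + p ^ (j - 1)) := by
        apply mul_right_cancel₀ (pow_ne_zero (p ^ i) hx)
        rw [H, hsplit]; ring
      obtain ⟨L, hL, hd⟩ := aux_shape ht0 hne2 hsh
      exact ⟨p ^ j - p ^ i, L, by omega, hL, hd⟩
    · have hplt : p ^ j < p ^ i := Nat.pow_lt_pow_right hp.one_lt hlt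
      have hsplit : (x : M) ^ p ^ i = x ^ (p ^ i - p ^ j) * x ^ p ^ j := by
        rw [← pow_add]; congr 1; omega
      have hsh : t ^ (p ^ (i - 1) + p ^ (j - 1)) = x ^ (p ^ i - p ^ j) * t ^ (2 * p ^ (s - 1)) := by
        apply mul_right_cancel₀ (pow_ne_zero (p ^ j) hx)
        rw [mul_comm, ← H, hsplit]; ring
      obtain ⟨L, hL, hd⟩ := aux_shape ht0 (Ne.symm hne2) hsh
      exact ⟨p ^ i - p ^ j, L, by omega, hL, hd⟩
/-- A prime of a function field `M` over a constant field `F`: a surjective additive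
valuation `M → ℤ` that is trivial on `F`. -/
structure FFPrime (F M : Type*) [Field F] [Field M] [Algebra F M] where
  v : M → ℤ
  map_mul : ∀ x y : M, x ≠ 0 → y ≠ 0 → v (x * y) = v x + v y
  add_min : ∀ x y : M, x ≠ 0 → y ≠ 0 → x + y ≠ 0 → min (v x) (v y) ≤ v (x + y)
  surj : ∀ n : ℤ, ∃ x : M, x ≠ 0 ∧ v x = n
  triv : ∀ c : F, c ≠ 0 → v (algebraMap F M c) = 0

/-- Let `F` be algebraically closed of characteristic `p > 2`, `M` a function field
over `F`, and `t ∈ M` transcendental over `F`, not a `p`-th power in `M`, with all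
zeros and poles of `t` simple. Then for `x, y ∈ M`, the system of equations `E` for
`(x, y)` and `(x + 1, y + 1)` is solvable in `M` if and only if `y = x^{p^s}` for some
natural number `s`. -/
theorem stmt_16 {F M : Type*} [Field F] [Field M] [Algebra F M] [IsAlgClosed F]
    (p : ℕ) (hp : p.Prime) (hp2 : 2 < p) [CharP F p]
    (t : M) (htrans : Transcendental F t)
    (hfin : FiniteDimensional (IntermediateField.adjoin F {t}) M)
    (hnp : ¬∃ c : M, c ^ p = t)
    (hsimple : ∀ P : FFPrime F M, P.v t ∈ ({-1, 0, 1} : Set ℤ))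
    (x y : M) :
    (∃ (s i j i₁ j₁ : ℕ) (u ut v vt u₁ ut₁ v₁ vt₁ : M),
      x ^ p - t ≠ 0 ∧ x ^ p - t⁻¹ ≠ 0 ∧
      y ^ p - t ^ p ^ s ≠ 0 ∧ y ^ p - t⁻¹ ^ p ^ s ≠ 0 ∧
      (x + 1) ^ p - t ≠ 0 ∧ (x + 1) ^ p - t⁻¹ ≠ 0 ∧
      (y + 1) ^ p - t ^ p ^ s ≠ 0 ∧ (y + 1) ^ p - t⁻¹ ^ p ^ s ≠ 0 ∧
      u = (x ^ p + t) / (x ^ p - t) ∧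
      ut = (x ^ p + t⁻¹) / (x ^ p - t⁻¹) ∧
      v = (y ^ p + t ^ p ^ s) / (y ^ p - t ^ p ^ s) ∧
      vt = (y ^ p + t⁻¹ ^ p ^ s) / (y ^ p - t⁻¹ ^ p ^ s) ∧
      v = u ^ p ^ i ∧ vt = ut ^ p ^ j ∧
      u₁ = ((x + 1) ^ p + t) / ((x + 1) ^ p - t) ∧
      ut₁ = ((x + 1) ^ p + t⁻¹) / ((x + 1) ^ p - t⁻¹) ∧
      v₁ = ((y + 1) ^ p + t ^ p ^ s) / ((y + 1) ^ p - t ^ p ^ s) ∧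
      vt₁ = ((y + 1) ^ p + t⁻¹ ^ p ^ s) / ((y + 1) ^ p - t⁻¹ ^ p ^ s) ∧
      v₁ = u₁ ^ p ^ i₁ ∧ vt₁ = ut₁ ^ p ^ j₁)
    ↔ (∃ s : ℕ, y = x ^ p ^ s) := by
  haveI : Fact p.Prime := ⟨hp⟩
  haveI : CharP M p := charP_of_injective_algebraMap (algebraMap F M).injective p
  have ht0 : t ≠ 0 := fun h0 => htrans (h0 ▸ isAlgebraic_zero)
  have hti0 : t⁻¹ ≠ 0 := inv_ne_zero ht0
  constructor
  · rintro ⟨s, i, j, i₁, j₁, u, ut, v, vt, u₁, ut₁, v₁, vt₁,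
      hA, hB, hC, hD, hE, hF, hG, hH, rfl, rfl, rfl, rfl, hvi, hvj,
      rfl, rfl, rfl, rfl, hvi₁, hvj₁⟩
    have h2 : (2 : M) ≠ 0 := by
      intro h0
      have hd : (p : ℕ) ∣ 2 := (CharP.cast_eq_zero_iff M p 2).mp (by exact_mod_cast h0)
      have := Nat.le_of_dvd (by norm_num) hd
      omega
    rw [div_pow, add_pow_char_pow, sub_pow_char_pow] at hvi hvj hvi₁ hvj₁
    have hCDi : (x ^ p) ^ p ^ i - t ^ p ^ i ≠ 0 := by
      rw [← sub_pow_char_pow]; exact pow_ne_zero _ hA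
    have E1 := aux_cross h2 hC hCDi hvi
    have hCDj : (x ^ p) ^ p ^ j - t⁻¹ ^ p ^ j ≠ 0 := by
      rw [← sub_pow_char_pow]; exact pow_ne_zero _ hB
    have E2' := aux_cross h2 hD hCDj hvj
    have E2 : (x ^ p) ^ p ^ j * t ^ p ^ j = y ^ p * t ^ p ^ s := by
      rw [inv_pow, inv_pow] at E2'
      field_simp at E2'
      linear_combination E2'
    have hCDi₁ : ((x + 1) ^ p) ^ p ^ i₁ - t ^ p ^ i₁ ≠ 0 := by
      rw [← sub_pow_char_pow]; exact pow_ne_zero _ hE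
    have E3 := aux_cross h2 hG hCDi₁ hvi₁
    have hCDj₁ : ((x + 1) ^ p) ^ p ^ j₁ - t⁻¹ ^ p ^ j₁ ≠ 0 := by
      rw [← sub_pow_char_pow]; exact pow_ne_zero _ hF
    have E4' := aux_cross h2 hH hCDj₁ hvj₁
    have E4 : ((x + 1) ^ p) ^ p ^ j₁ * t ^ p ^ j₁ = (y + 1) ^ p * t ^ p ^ s := by
      rw [inv_pow, inv_pow] at E4'
      field_simp at E4'
      linear_combination E4'
    by_cases hx0 : x = 0
    · rw [hx0] at E1
      simp only [zero_pow hp.ne_zero, zero_pow (pow_pos hp.pos i).ne', mul_zero] at E1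
      rcases mul_eq_zero.mp E1.symm with h0 | h0
      · have hy0 : y = 0 := pow_eq_zero_iff hp.ne_zero |>.mp h0
        exact ⟨0, by rw [hx0, hy0, pow_zero, pow_one]⟩
      · exact absurd h0 (pow_ne_zero _ ht0)
    by_cases hx1 : x + 1 = 0
    · rw [hx1] at E3
      simp only [zero_pow hp.ne_zero, zero_pow (pow_pos hp.pos i₁).ne', mul_zero] at E3
      rcases mul_eq_zero.mp E3.symm with h0 | h0
      · have hy1 : y + 1 = 0 := pow_eq_zero_iff hp.ne_zero |>.mp h0
        refine ⟨1, ?_⟩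
        have hxe : x = -1 := eq_neg_of_add_eq_zero_left hx1
        have hye : y = -1 := eq_neg_of_add_eq_zero_left hy1
        rw [hxe, hye, pow_one, (hp.odd_of_ne_two (by omega)).neg_one_pow]
      · exact absurd h0 (pow_ne_zero _ ht0)
    rcases Nat.eq_zero_or_pos s with hs | hs
    · subst hs
      have hi0 : i = 0 := by
        by_contra hi
        simp only [pow_zero, pow_one] at E1
        have hpi : p ^ (i - 1) * p = p ^ i := by rw [← pow_succ]; congr 1; omega
        refine hnp (aux_root (z := y * t ^ p ^ (i - 1)) (pow_ne_zero (p ^ i) hx0) ?_)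
        rw [mul_pow, ← pow_mul, ← pow_mul, hpi]
        linear_combination E1
      subst hi0
      simp only [pow_zero, pow_one] at E1
      have hxy : y ^ p * t = x ^ p * t := by linear_combination -E1
      exact ⟨0, by rw [pow_zero, pow_one]; exact aux_frob (mul_right_cancel₀ ht0 hxy)⟩
    · rcases aux_sys hp hp2 htrans hnp hx0 hs E1 E2 with hdone | ⟨K, L, hK, hL, hd⟩
      · exact ⟨s, hdone⟩
      rcases aux_sys hp hp2 htrans hnp hx1 hs E3 E4 with hdone | ⟨K₁, L₁, hK₁, hL₁, hd₁⟩
      · refine ⟨s, ?_⟩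
        rw [add_pow_char_pow, one_pow] at hdone
        exact add_right_cancel hdone
      exfalso
      have hxt : Transcendental F x := by
        intro halg
        have hxK : IsAlgebraic F (x ^ K) :=
          isAlgebraic_iff_isIntegral.mpr ((isAlgebraic_iff_isIntegral.mp halg).pow K)
        rcases hd with h | h
        · exact (htrans.pow hL) (by rw [h]; exact hxK)
        · have hxK0 : x ^ K ≠ 0 := pow_ne_zero _ hx0
          have hinv : t ^ L = (x ^ K)⁻¹ := by
            rw [inv_eq_one_div, eq_div_iff hxK0]
            linear_combination h
          exact (htrans.pow hL) (by rw [hinv]; exact hxK.inv)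
      rcases hd with h | h <;> rcases hd₁ with h₁ | h₁
      · refine aux_poly hxt (b := K₁ * L) (Nat.mul_pos hK hL₁) (Or.inl ?_)
        calc x ^ (K * L₁) = (x ^ K) ^ L₁ := by rw [pow_mul]
          _ = (t ^ L) ^ L₁ := by rw [h]
          _ = (t ^ L₁) ^ L := by rw [← pow_mul, ← pow_mul, Nat.mul_comm]
          _ = ((x + 1) ^ K₁) ^ L := by rw [h₁]
          _ = (x + 1) ^ (K₁ * L) := by rw [pow_mul]
      · refine aux_poly hxt (b := K₁ * L) (Nat.mul_pos hK hL₁) (Or.inr ?_)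
        have e1 : x ^ (K * L₁) = t ^ (L * L₁) := by rw [pow_mul, ← h, ← pow_mul]
        have e2 : (x + 1) ^ (K₁ * L) * t ^ (L₁ * L) = 1 := by
          rw [pow_mul, pow_mul, ← mul_pow, h₁, one_pow]
        rw [e1, Nat.mul_comm L L₁, mul_comm]
        exact e2
      · refine aux_poly hxt (b := K₁ * L) (Nat.mul_pos hK hL₁) (Or.inr ?_)
        have e1 : x ^ (K * L₁) * t ^ (L * L₁) = 1 := by
          rw [pow_mul, pow_mul, ← mul_pow, h, one_pow]
        have e2 : (x + 1) ^ (K₁ * L) = t ^ (L₁ * L) := by rw [pow_mul, ← h₁, ← pow_mul]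
        rw [e2, Nat.mul_comm L₁ L]
        exact e1
      · refine aux_poly hxt (b := K₁ * L) (Nat.mul_pos hK hL₁) (Or.inl ?_)
        have e1 : x ^ (K * L₁) * t ^ (L * L₁) = 1 := by
          rw [pow_mul, pow_mul, ← mul_pow, h, one_pow]
        have e2 : (x + 1) ^ (K₁ * L) * t ^ (L₁ * L) = 1 := by
          rw [pow_mul, pow_mul, ← mul_pow, h₁, one_pow]
        have ht' : t ^ (L * L₁) ≠ 0 := pow_ne_zero _ ht0
        have : x ^ (K * L₁) * t ^ (L * L₁) = (x + 1) ^ (K₁ * L) * t ^ (L * L₁) := by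
          rw [e1, Nat.mul_comm L L₁]
          exact e2.symm
        exact mul_right_cancel₀ ht' this
  · rintro ⟨s, rfl⟩
    have h1 : x ^ p - t ≠ 0 := sub_ne_zero.mpr fun h => hnp ⟨x, h⟩
    have h2 : x ^ p - t⁻¹ ≠ 0 := by
      rw [sub_ne_zero]
      intro h
      by_cases hx : x = 0
      · rw [hx, zero_pow hp.ne_zero] at h
        exact hti0 h.symm
      · exact hnp ⟨x⁻¹, by rw [inv_pow, h, inv_inv]⟩
    have hyp : (x ^ p ^ s) ^ p = (x ^ p) ^ p ^ s := by
      rw [← pow_mul, ← pow_mul, Nat.mul_comm]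
    have h3 : (x ^ p ^ s) ^ p - t ^ p ^ s ≠ 0 := by
      rw [hyp, ← sub_pow_char_pow]; exact pow_ne_zero _ h1
    have h4 : (x ^ p ^ s) ^ p - t⁻¹ ^ p ^ s ≠ 0 := by
      rw [hyp, ← sub_pow_char_pow]; exact pow_ne_zero _ h2
    have h5 : (x + 1) ^ p - t ≠ 0 := sub_ne_zero.mpr fun h => hnp ⟨x + 1, h⟩
    have h6 : (x + 1) ^ p - t⁻¹ ≠ 0 := by
      rw [sub_ne_zero]
      intro h
      by_cases hx : x + 1 = 0
      · rw [hx, zero_pow hp.ne_zero] at h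
        exact hti0 h.symm
      · exact hnp ⟨(x + 1)⁻¹, by rw [inv_pow, h, inv_inv]⟩
    have hy1 : x ^ p ^ s + 1 = (x + 1) ^ p ^ s := by rw [add_pow_char_pow, one_pow]
    have hyp1 : (x ^ p ^ s + 1) ^ p = ((x + 1) ^ p) ^ p ^ s := by
      rw [hy1, ← pow_mul, ← pow_mul, Nat.mul_comm]
    have h7 : (x ^ p ^ s + 1) ^ p - t ^ p ^ s ≠ 0 := by
      rw [hyp1, ← sub_pow_char_pow]; exact pow_ne_zero _ h5
    have h8 : (x ^ p ^ s + 1) ^ p - t⁻¹ ^ p ^ s ≠ 0 := by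
      rw [hyp1, ← sub_pow_char_pow]; exact pow_ne_zero _ h6
    refine ⟨s, s, s, s, s,
      (x ^ p + t) / (x ^ p - t), (x ^ p + t⁻¹) / (x ^ p - t⁻¹),
      ((x ^ p ^ s) ^ p + t ^ p ^ s) / ((x ^ p ^ s) ^ p - t ^ p ^ s),
      ((x ^ p ^ s) ^ p + t⁻¹ ^ p ^ s) / ((x ^ p ^ s) ^ p - t⁻¹ ^ p ^ s),
      ((x + 1) ^ p + t) / ((x + 1) ^ p - t), ((x + 1) ^ p + t⁻¹) / ((x + 1) ^ p - t⁻¹),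
      ((x ^ p ^ s + 1) ^ p + t ^ p ^ s) / ((x ^ p ^ s + 1) ^ p - t ^ p ^ s),
      ((x ^ p ^ s + 1) ^ p + t⁻¹ ^ p ^ s) / ((x ^ p ^ s + 1) ^ p - t⁻¹ ^ p ^ s),
      h1, h2, h3, h4, h5, h6, h7, h8, rfl, rfl, rfl, rfl, ?_, ?_, rfl, rfl, rfl, rfl, ?_, ?_⟩
    · rw [hyp, div_pow, add_pow_char_pow, sub_pow_char_pow]
    · rw [hyp, div_pow, add_pow_char_pow, sub_pow_char_pow]
    · rw [hyp1, div_pow, add_pow_char_pow, sub_pow_char_pow]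
    · rw [hyp1, div_pow, add_pow_char_pow, sub_pow_char_pow]
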